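/- In the relative neighbourhood graph on a finite planar point set with pairwise distinct distances, every vertex has degree at most 5. -/

import Mathlib

open Real

private lemma gap_lemma {d : ℝ} (h0 : 0 ≤ d) (hc : Real.cos d < 1/2) : π/3 < d := by
  by_contra h
  push_neg at h
  have hp : π/3 ≤ π := by linarith [Real.pi_pos]
  have := Real.cos_le_cos_of_nonneg_of_le_pi h0 hp h
  rw [Real.cos_pi_div_three] at this
  linarith

private lemma wrap_lemma {d : ℝ} (h1 : 5*π/3 ≤ d) (h2 : d ≤ 2*π) :
    1/2 ≤ Real.cos d := by
  have hp : π/3 ≤ π := by linarith [Real.pi_pos]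
  have h3 : Real.cos (2*π - d) = Real.cos d := Real.cos_two_pi_sub d
  have h4 : 0 ≤ 2*π - d := by linarith
  have h5 : 2*π - d ≤ π/3 := by linarith
  have := Real.cos_le_cos_of_nonneg_of_le_pi h4 hp h5
  rw [Real.cos_pi_div_three] at this
  linarith

private lemma pigeon (θ : Fin 6 → ℝ) (hθ : ∀ a, θ a ∈ Set.Ioc (-π) π) :
    ∃ a b, a ≠ b ∧ (1:ℝ)/2 ≤ Real.cos (θ a - θ b) := by
  by_contra hcon
  push_neg at hcon
  set σ := Tuple.sort θ with hσ
  have hmono : Monotone (θ ∘ σ) := Tuple.monotone_sort θ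
  have key : ∀ a b : Fin 6, a ≠ b → θ (σ a) ≤ θ (σ b) → θ (σ a) + π/3 < θ (σ b) := by
    intro a b hab hle
    have hne : σ a ≠ σ b := fun h => hab (σ.injective h)
    have hc := hcon (σ b) (σ a) hne.symm
    have := gap_lemma (by linarith) hc
    linarith
  have h01 := key 0 1 (by decide) (hmono (show (0:Fin 6) ≤ 1 by decide))
  have h12 := key 1 2 (by decide) (hmono (show (1:Fin 6) ≤ 2 by decide))
  have h23 := key 2 3 (by decide) (hmono (show (2:Fin 6) ≤ 3 by decide))
  have h34 := key 3 4 (by decide) (hmono (show (3:Fin 6) ≤ 4 by decide))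
  have h45 := key 4 5 (by decide) (hmono (show (4:Fin 6) ≤ 5 by decide))
  have hub := (hθ (σ 5)).2
  have hlb := (hθ (σ 0)).1
  have hd1 : 5*π/3 ≤ θ (σ 5) - θ (σ 0) := by linarith
  have hd2 : θ (σ 5) - θ (σ 0) ≤ 2*π := by linarith
  have hwrap := wrap_lemma hd1 hd2
  have hne : σ 5 ≠ σ 0 := fun h => by
    have : (5:Fin 6) = 0 := σ.injective h
    exact absurd this (by decide)
  exact absurd hwrap (not_le.mpr (hcon (σ 5) (σ 0) hne))

private lemma six_points (z : Fin 6 → ℂ) (hz : ∀ a, z a ≠ 0)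
    (h : ∀ a b, a ≠ b → ‖z a‖ < ‖z a - z b‖) : False := by
  obtain ⟨a, b, hab, hcos⟩ := pigeon (fun a => (z a).arg)
    (fun a => Complex.arg_mem_Ioc (z a))
  set A := ‖z a‖ with hA'
  set B := ‖z b‖ with hB'
  set C := ‖z a - z b‖ with hC'
  have hA : 0 < A := norm_pos_iff.mpr (hz a)
  have hB : 0 < B := norm_pos_iff.mpr (hz b)
  have hAC : A < C := h a b hab
  have hBC : B < C := by
    have := h b a hab.symm
    rwa [norm_sub_rev] at this
  have hre : ((z a) * (starRingEnd ℂ) (z b)).re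
      = A * B * Real.cos ((z a).arg - (z b).arg) := by
    have hca := Complex.cos_arg (hz a)
    have hsa := Complex.sin_arg (z a)
    have hcb := Complex.cos_arg (hz b)
    have hsb := Complex.sin_arg (z b)
    rw [Real.cos_sub]
    simp only [Complex.mul_re, Complex.conj_re, Complex.conj_im]
    rw [hca, hsa, hcb, hsb, ← hA', ← hB']
    field_simp
    ring
  have hC2 : C^2 = A^2 + B^2 - 2 * (A * B * Real.cos ((z a).arg - (z b).arg)) := by
    rw [hC', hA', hB', Complex.sq_norm, Complex.sq_norm, Complex.sq_norm,
      Complex.normSq_sub, ← hA', ← hB', hre]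
  have hcos' : (1:ℝ)/2 ≤ Real.cos ((z a).arg - (z b).arg) := hcos
  nlinarith [mul_pos hA hB, mul_pos (sub_pos.mpr hAC) (sub_pos.mpr hBC),
    mul_lt_mul_of_pos_right hAC hA, mul_lt_mul_of_pos_right hBC hB]

def rngGraph (n : ℕ) (p : Fin n → EuclideanSpace ℝ (Fin 2)) : SimpleGraph (Fin n) :=
  SimpleGraph.fromRel (fun i j =>
    ¬ ∃ k : Fin n, ‖p i - p k‖ < ‖p i - p j‖ ∧ ‖p j - p k‖ < ‖p i - p j‖)

/-- in the RNG with pairwise distinct distances every vertex has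
degree at most 5. -/
theorem rng_degree_le_five (n : ℕ) (p : Fin n → EuclideanSpace ℝ (Fin 2))
    (hinj : Function.Injective p)
    (hdist : ∀ i j k l : Fin n, i ≠ j → k ≠ l →
      dist (p i) (p j) = dist (p k) (p l) → (i = k ∧ j = l) ∨ (i = l ∧ j = k))
    (i : Fin n) :
    {j : Fin n | (rngGraph n p).Adj i j}.ncard ≤ 5 := by
  by_contra hcard
  push_neg at hcard
  set S := {j : Fin n | (rngGraph n p).Adj i j} with hS
  have hadj : ∀ j, (rngGraph n p).Adj i j → i ≠ j ∧
      ∀ k, ‖p i - p k‖ < ‖p i - p j‖ → ¬ ‖p j - p k‖ < ‖p i - p j‖ := by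
    intro j hj
    rw [rngGraph, SimpleGraph.fromRel_adj] at hj
    obtain ⟨hne, hrel⟩ := hj
    refine ⟨hne, ?_⟩
    intro k h1 h2
    have hsym : ‖p j - p i‖ = ‖p i - p j‖ := norm_sub_rev _ _
    rcases hrel with hr | hr
    · exact hr ⟨k, h1, h2⟩
    · exact hr ⟨k, by rw [hsym]; exact h2, by rw [hsym]; exact h1⟩
  -- extract six neighbours
  have hfin : S.Finite := Set.toFinite _
  have hc6 : 6 ≤ hfin.toFinset.card := by
    rw [← Set.ncard_eq_toFinset_card S hfin]
    omega
  obtain ⟨t, hts, htc⟩ := Finset.exists_subset_card_eq hc6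
  let e := Finset.equivFinOfCardEq htc
  set j : Fin 6 → Fin n := fun a => ((e.symm a : t) : Fin n) with hj
  have hj_inj : Function.Injective j := by
    intro a b hab
    have : (e.symm a : t) = (e.symm b : t) := Subtype.coe_injective hab
    exact e.symm.injective this
  have hjS : ∀ a, (rngGraph n p).Adj i (j a) := by
    intro a
    have : (j a) ∈ t := (e.symm a).2
    have := hts this
    rw [Set.Finite.mem_toFinset] at this
    exact this
  have hine : ∀ a, i ≠ j a := fun a => (hadj (j a) (hjS a)).1
  -- key distance claim
  have hkey : ∀ a b : Fin 6, a ≠ b → ‖p i - p (j a)‖ < ‖p (j a) - p (j b)‖ := by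
    intro a b hab
    obtain ⟨hia, ha⟩ := hadj (j a) (hjS a)
    obtain ⟨hib, hb⟩ := hadj (j b) (hjS b)
    have hjab : j a ≠ j b := fun h => hab (hj_inj h)
    rcases lt_trichotomy ‖p i - p (j a)‖ ‖p i - p (j b)‖ with hlt | heq | hgt
    · have hnb := hb (j a) hlt
      push_neg at hnb
      have hrev : ‖p (j a) - p (j b)‖ = ‖p (j b) - p (j a)‖ := norm_sub_rev _ _
      linarith [hnb, hrev.ge]
    · exfalso
      have := hdist i (j a) i (j b) hia hib (by rw [dist_eq_norm, dist_eq_norm]; exact heq)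
      rcases this with ⟨_, h2⟩ | ⟨h1, _⟩
      · exact hjab h2
      · exact hib h1
    · have hna := ha (j b) hgt
      push_neg at hna
      rcases hna.lt_or_eq with h | h
      · exact h
      · exfalso
        have := hdist (j a) (j b) i (j a) hjab hia
          (by rw [dist_eq_norm, dist_eq_norm]; exact h.symm)
        rcases this with ⟨h1, _⟩ | ⟨_, h2⟩
        · exact hia h1.symm
        · exact hib h2.symm
  -- complex points
  set z : Fin 6 → ℂ := fun a => ⟨(p (j a) - p i) 0, (p (j a) - p i) 1⟩ with hz'
  have habs : ∀ a, ‖z a‖ = ‖p (j a) - p i‖ := by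
    intro a
    rw [EuclideanSpace.norm_eq, Complex.norm_def, Complex.normSq_mk]
    congr 1
    rw [Fin.sum_univ_two]
    simp [Real.norm_eq_abs, sq_abs]
    ring
  have habs2 : ∀ a b, ‖z a - z b‖ = ‖p (j a) - p (j b)‖ := by
    intro a b
    rw [EuclideanSpace.norm_eq, Complex.norm_def]
    have hre : (z a - z b).re = (p (j a) - p (j b)) 0 := by
      simp [hz', Complex.sub_re, PiLp.sub_apply]
    have him : (z a - z b).im = (p (j a) - p (j b)) 1 := by
      simp [hz', Complex.sub_im, PiLp.sub_apply]
    rw [Complex.normSq_apply, hre, him]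
    congr 1
    rw [Fin.sum_univ_two]
    simp [Real.norm_eq_abs, sq_abs]
    ring
  have hzne : ∀ a, z a ≠ 0 := by
    intro a h
    have := habs a
    rw [h, norm_zero] at this
    have : p (j a) = p i := by
      have := this.symm
      rwa [norm_sub_eq_zero_iff] at this
    exact hine a (hinj this).symm
  apply six_points z hzne
  intro a b hab
  rw [habs, habs2]
  have := hkey a b hab
  rwa [norm_sub_rev (p i)] at this
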